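/- arXiv:2006.12192 — 2 statements merged into one kernel-verified Lean document; each statement's English description precedes it below -/
import Mathlib

section
/- Let 2 < t₀ < T, δ, K₁, K₂ > 0, p₁, p₂ > 1 with p₂ < p₁ + 1, and let φ ∈ C¹([t₀, T)) be nonnegative. Suppose δ ≤ K₁ t φ'(t) and φ(t)^{p₁} ≤ K₂ t (log t)^{p₂ - 1} φ'(t) for all t ∈ (t₀, T). Then there exist constants δ₀ > 0 and K₃ > 0, depending only on t₀, K₁, K₂, p₁, p₂ (not on δ), such that whenever 0 < δ < δ₀, T ≤ exp(K₃ δ^{-(p₁-1)/(p₁-p₂+1)}). -/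
set_option maxHeartbeats 1000000

open Real Set

/-- ODE comparison lemma (Lemma 3.10 of Ikeda–Sobajima–Wakasa). -/
theorem ode_lifespan_lemma (t₀ K₁ K₂ p₁ p₂ : ℝ)
    (ht₀ : 2 < t₀) (hK₁ : 0 < K₁) (hK₂ : 0 < K₂)
    (hp₁ : 1 < p₁) (hp₂ : 1 < p₂) (hp : p₂ < p₁ + 1) :
    ∃ δ₀ K₃ : ℝ, 0 < δ₀ ∧ 0 < K₃ ∧
      ∀ δ T : ℝ, 0 < δ → δ < δ₀ → t₀ < T →
        ∀ φ φ' : ℝ → ℝ,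
          (∀ t ∈ Ico t₀ T, HasDerivAt φ (φ' t) t) →
          (∀ t ∈ Ico t₀ T, 0 ≤ φ t) →
          (∀ t ∈ Ioo t₀ T, δ ≤ K₁ * t * φ' t) →
          (∀ t ∈ Ioo t₀ T, φ t ^ p₁ ≤ K₂ * t * (Real.log t) ^ (p₂ - 1) * φ' t) →
          T ≤ Real.exp (K₃ * δ ^ (-(p₁ - 1) / (p₁ - p₂ + 1))) := by
  have ht₀1 : (1:ℝ) < t₀ := by linarith
  have hlt₀ : 0 < Real.log t₀ := Real.log_pos ht₀1
  have hp₁1 : (0:ℝ) < p₁ - 1 := by linarith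
  set β : ℝ := p₁ - p₂ + 1 with hβ
  have hβ0 : 0 < β := by simp only [hβ]; linarith
  set C₀ : ℝ := (2 * K₂ * (4:ℝ) ^ (p₁ - 1) / (p₁ - 1)) * K₁ ^ (p₁ - 1) with hC₀
  have h4p : (0:ℝ) < (4:ℝ) ^ (p₁ - 1) := Real.rpow_pos_of_pos (by norm_num) _
  have hC₀0 : 0 < C₀ := by
    apply mul_pos (div_pos (by positivity) hp₁1) (Real.rpow_pos_of_pos hK₁ _)
  have hCβ : 0 < C₀ ^ (1/β) := Real.rpow_pos_of_pos hC₀0 _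
  set K₃ : ℝ := C₀ ^ (1/β) + 4 * Real.log t₀ with hK₃
  have hK₃pos : 0 < K₃ := by positivity
  refine ⟨1, K₃, one_pos, hK₃pos, ?_⟩
  intro δ T hδ hδ1 hT φ φ' hderiv hpos h1 h2
  by_contra hcon
  push_neg at hcon
  set A : ℝ := δ ^ (-(p₁ - 1) / (p₁ - p₂ + 1)) with hA
  have hApos : 0 < A := Real.rpow_pos_of_pos hδ _
  have hA1 : 1 ≤ A :=
    Real.one_le_rpow_of_pos_of_le_one_of_nonpos hδ hδ1.le
      (div_nonpos_iff.mpr (Or.inr ⟨by linarith, by linarith⟩))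
  set B : ℝ := K₃ * A with hB
  have hBK₃ : K₃ ≤ B := le_mul_of_one_le_right hK₃pos.le hA1
  have hB4 : 4 * Real.log t₀ ≤ B := by
    have h' : 4 * Real.log t₀ ≤ K₃ := by
      simp only [hK₃]; linarith
    linarith
  have hBpos : 0 < B := by linarith
  -- τ and s
  set τ : ℝ := Real.exp B with hτ
  have hlogτ : Real.log τ = B := Real.log_exp B
  have hτT : τ < T := hcon
  set s : ℝ := Real.exp (B/2) with hs
  have hlogs : Real.log s = B/2 := Real.log_exp _
  have ht₀s : t₀ < s := by
    calc t₀ = Real.exp (Real.log t₀) := (Real.exp_log (by linarith)).symm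
    _ < Real.exp (B/2) := Real.exp_lt_exp.mpr (by linarith)
  have hsτ : s < τ := Real.exp_lt_exp.mpr (by linarith)
  have hτt₀ : t₀ < τ := lt_trans ht₀s hsτ
  have hsubT : Icc t₀ τ ⊆ Ico t₀ T := fun x hx => ⟨hx.1, lt_of_le_of_lt hx.2 hτT⟩
  have hsubT' : Ioo t₀ τ ⊆ Ioo t₀ T := fun x hx => ⟨hx.1, lt_trans hx.2 hτT⟩
  have hxpos : ∀ x ∈ Icc t₀ τ, (0:ℝ) < x := fun x hx => by
    have := hx.1; linarith
  -- φ' is positive on Ioo t₀ T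
  have hφ'pos : ∀ x ∈ Ioo t₀ T, 0 < φ' x := by
    intro x hx
    have hx0 : 0 < x := by have := hx.1; linarith
    by_contra hle
    push_neg at hle
    have hh := h1 x hx
    have : K₁ * x * φ' x ≤ 0 := mul_nonpos_of_nonneg_of_nonpos (by positivity) hle
    linarith only [hh, this, hδ]
  -- Step A : lower bound for φ
  have hφlb : ∀ t ∈ Icc t₀ τ, δ / K₁ * (Real.log t - Real.log t₀) ≤ φ t := by
    have hmono : MonotoneOn (fun t => φ t - δ / K₁ * Real.log t) (Icc t₀ τ) := by
      apply monotoneOn_of_hasDerivWithinAt_nonneg (convex_Icc _ _)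
        (f' := fun t => φ' t - δ / K₁ * t⁻¹)
      · intro x hx
        have hx0 : (0:ℝ) < x := hxpos x hx
        exact ((hderiv x (hsubT hx)).continuousAt.sub
          (continuousAt_const.mul (Real.continuousAt_log hx0.ne'))).continuousWithinAt
      · intro x hx
        rw [interior_Icc] at hx
        have hx0 : (0:ℝ) < x := hxpos x ⟨hx.1.le, hx.2.le⟩
        exact (((hderiv x (hsubT ⟨hx.1.le, hx.2.le⟩)).sub
          ((Real.hasDerivAt_log hx0.ne').const_mul (δ/K₁)))).hasDerivWithinAt
      · intro x hx
        rw [interior_Icc] at hx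
        have hx0 : (0:ℝ) < x := hxpos x ⟨hx.1.le, hx.2.le⟩
        have hd := h1 x (hsubT' hx)
        have h' : δ / K₁ * x⁻¹ = δ / (K₁ * x) := by
          field_simp
        rw [sub_nonneg, h', div_le_iff₀ (by positivity)]
        linarith only [hd]
    intro t ht
    have hmm := hmono (left_mem_Icc.mpr hτt₀.le) ht ht.1
    have hφt₀ : 0 ≤ φ t₀ := hpos t₀ ⟨le_rfl, hT⟩
    simp only at hmm
    rw [mul_sub]
    linarith only [hmm, hφt₀, hlt₀]
  -- positivity of φ on [s, τ]
  have hIccsub : Icc s τ ⊆ Icc t₀ τ := Icc_subset_Icc ht₀s.le le_rfl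
  have hφpos : ∀ t ∈ Icc s τ, δ / K₁ * (B/4) ≤ φ t := by
    intro t ht
    have hlb := hφlb t (hIccsub ht)
    have hlt : Real.log s ≤ Real.log t := Real.log_le_log (Real.exp_pos _) ht.1
    have h' : B/4 ≤ Real.log t - Real.log t₀ := by
      rw [hlogs] at hlt; linarith only [hlt, hB4]
    have haux : 0 ≤ δ / K₁ := by positivity
    calc δ / K₁ * (B/4) ≤ δ / K₁ * (Real.log t - Real.log t₀) :=
          mul_le_mul_of_nonneg_left h' haux
      _ ≤ φ t := hlb
  have hφpos' : ∀ t ∈ Icc s τ, 0 < φ t := by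
    intro t ht
    have h' := hφpos t ht
    have h'' : 0 < δ / K₁ * (B/4) := by positivity
    linarith only [h', h'']
  -- Step B : antitonicity of G
  set c : ℝ := B ^ (1 - p₂) / K₂ with hc
  have hcpos : 0 < c := div_pos (Real.rpow_pos_of_pos hBpos _) hK₂
  have hanti : AntitoneOn
      (fun t => φ t ^ (1 - p₁) * (p₁ - 1)⁻¹ + c * Real.log t) (Icc s τ) := by
    apply antitoneOn_of_hasDerivWithinAt_nonpos (convex_Icc _ _)
      (f' := fun t => φ' t * (1 - p₁) * φ t ^ (1 - p₁ - 1) * (p₁ - 1)⁻¹ + c * t⁻¹)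
    · intro x hx
      have hx0 : (0:ℝ) < x := hxpos x (hIccsub hx)
      have hφx := hφpos' x hx
      exact ((((hderiv x (hsubT (hIccsub hx))).continuousAt.rpow_const
        (Or.inl hφx.ne')).mul continuousAt_const).add
        (continuousAt_const.mul (Real.continuousAt_log hx0.ne'))).continuousWithinAt
    · intro x hx
      rw [interior_Icc] at hx
      have hx' : x ∈ Icc s τ := ⟨hx.1.le, hx.2.le⟩
      have hx0 : (0:ℝ) < x := hxpos x (hIccsub hx')
      have hφx := hφpos' x hx'
      exact ((((hderiv x (hsubT (hIccsub hx'))).rpow_const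
        (Or.inl hφx.ne')).mul_const _).add
        ((Real.hasDerivAt_log hx0.ne').const_mul c)).hasDerivWithinAt
    · intro x hx
      rw [interior_Icc] at hx
      have hx' : x ∈ Icc s τ := ⟨hx.1.le, hx.2.le⟩
      have hx0 : (0:ℝ) < x := hxpos x (hIccsub hx')
      have hφx := hφpos' x hx'
      have hxT : x ∈ Ioo t₀ T := hsubT' ⟨lt_trans ht₀s hx.1, hx.2⟩
      have hφ'x := hφ'pos x hxT
      have hlogx : 0 < Real.log x := by
        have h' : Real.log s ≤ Real.log x := Real.log_le_log (Real.exp_pos _) hx'.1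
        rw [hlogs] at h'; linarith only [h', hB4, hlt₀]
      have hlogxB : Real.log x ≤ B := by
        have h' : Real.log x ≤ Real.log τ := Real.log_le_log hx0 hx'.2
        rwa [hlogτ] at h'
      have hE : 0 < B ^ (p₂ - 1) := Real.rpow_pos_of_pos hBpos _
      have hkey : φ x ^ p₁ ≤ K₂ * x * B ^ (p₂ - 1) * φ' x := by
        have h2' := h2 x hxT
        have hrp : Real.log x ^ (p₂-1) ≤ B ^ (p₂-1) :=
          Real.rpow_le_rpow hlogx.le hlogxB (by linarith)
        linarith only [mul_le_mul_of_nonneg_left hrp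
          (show (0:ℝ) ≤ K₂ * x * φ' x by positivity), h2']
      have hP : 0 < φ x ^ p₁ := Real.rpow_pos_of_pos hφx _
      have hmain : c * x⁻¹ ≤ φ' x * (φ x ^ p₁)⁻¹ := by
        have hcE : c = (B ^ (p₂-1))⁻¹ / K₂ := by
          rw [hc, show (1 - p₂) = -(p₂ - 1) by ring, Real.rpow_neg hBpos.le]
        have h3 : (1:ℝ)/(K₂ * x * B ^ (p₂-1)) ≤ φ' x / (φ x ^ p₁) := by
          rw [div_le_div_iff₀ (by positivity) hP]
          linarith only [hkey]
        calc c * x⁻¹ = 1/(K₂ * x * B ^ (p₂-1)) := by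
              rw [hcE]; field_simp
          _ ≤ φ' x / (φ x ^ p₁) := h3
          _ = φ' x * (φ x ^ p₁)⁻¹ := div_eq_mul_inv _ _
      have hrw : φ x ^ (1 - p₁ - 1) = (φ x ^ p₁)⁻¹ := by
        rw [show (1 - p₁ - 1) = -p₁ by ring, Real.rpow_neg hφx.le]
      rw [hrw]
      have h4 : φ' x * (1 - p₁) * (φ x ^ p₁)⁻¹ * (p₁ - 1)⁻¹
          = -(φ' x * (φ x ^ p₁)⁻¹) := by
        field_simp
        ring
      rw [h4]
      linarith only [hmain]
  -- apply antitonicity at endpoints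
  have hGend := hanti (left_mem_Icc.mpr hsτ.le) (right_mem_Icc.mpr hsτ.le) hsτ.le
  simp only at hGend
  rw [hlogτ, hlogs] at hGend
  have hφτnn : 0 ≤ φ τ ^ (1 - p₁) :=
    (Real.rpow_pos_of_pos (hφpos' τ (right_mem_Icc.mpr hsτ.le)) _).le
  have hinv : 0 < (p₁ - 1)⁻¹ := by positivity
  have hstep : c * (B/2) ≤ φ s ^ (1 - p₁) * (p₁ - 1)⁻¹ := by
    linarith only [mul_nonneg hφτnn hinv.le, hGend]
  -- lower bound on φ s, turned into upper bound on φ s ^ (1-p₁)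
  set M : ℝ := δ / K₁ * (B/4) with hM
  have hM0 : 0 < M := by positivity
  have hφsM : M ≤ φ s := hφpos s (left_mem_Icc.mpr hsτ.le)
  have hub : φ s ^ (1 - p₁) ≤ M ^ (1 - p₁) :=
    Real.rpow_le_rpow_of_nonpos hM0 hφsM (by linarith)
  have hstep2 : c * (B/2) ≤ M ^ (1 - p₁) * (p₁ - 1)⁻¹ :=
    le_trans hstep (mul_le_mul_of_nonneg_right hub hinv.le)
  have hMval : M ^ (1 - p₁) = (δ/K₁) ^ (1 - p₁) * (B/4) ^ (1 - p₁) :=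
    Real.mul_rpow (by positivity) (by positivity)
  -- combine everything : B ^ β ≤ C₀ * δ ^ (-(p₁ - 1))
  have e1 : B ^ β = B ^ (1 - p₂) * B * B ^ (p₁ - 1) := by
    have h' : B ^ (1-p₂) * B ^ (1:ℝ) * B ^ (p₁-1) = B ^ β := by
      rw [← Real.rpow_add hBpos, ← Real.rpow_add hBpos]
      congr 1
      rw [hβ]; ring
    rw [← h', Real.rpow_one]
  have e2 : (B/4) ^ (1 - p₁) * B ^ (p₁ - 1) = (4:ℝ) ^ (p₁ - 1) := by
    have hb1 : B ^ (1-p₁) * B ^ (p₁-1) = 1 := by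
      rw [← Real.rpow_add hBpos]; norm_num
    rw [Real.div_rpow hBpos.le (by norm_num), div_mul_eq_mul_div, hb1,
      show (1-p₁) = -(p₁-1) by ring, Real.rpow_neg (by norm_num : (0:ℝ) ≤ 4),
      one_div, inv_inv]
  have hδK : (δ/K₁) ^ (1 - p₁) = δ ^ (-(p₁-1)) * K₁ ^ (p₁-1) := by
    rw [Real.div_rpow hδ.le hK₁.le, show (1-p₁) = -(p₁-1) by ring,
      Real.rpow_neg hK₁.le, div_eq_mul_inv, inv_inv]
  have hBβ : B ^ β ≤ C₀ * δ ^ (-(p₁ - 1)) := by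
    have hmul := mul_le_mul_of_nonneg_right hstep2
      (show (0:ℝ) ≤ 2 * K₂ * B ^ (p₁-1) by positivity)
    have eL : c * (B/2) * (2 * K₂ * B ^ (p₁-1)) = B ^ β := by
      rw [hc, e1]; field_simp
    have eR : M ^ (1 - p₁) * (p₁ - 1)⁻¹ * (2 * K₂ * B ^ (p₁-1))
        = C₀ * δ ^ (-(p₁ - 1)) := by
      rw [hMval]
      calc (δ/K₁) ^ (1-p₁) * (B/4) ^ (1-p₁) * (p₁-1)⁻¹ * (2 * K₂ * B ^ (p₁-1))
          = (δ/K₁) ^ (1-p₁) * ((B/4) ^ (1-p₁) * B ^ (p₁-1)) * (p₁-1)⁻¹ * (2 * K₂) := by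
            ring
        _ = C₀ * δ ^ (-(p₁ - 1)) := by
            rw [e2, hδK, hC₀]
            field_simp
    rw [eL, eR] at hmul
    exact hmul
  -- conclude B ≤ C₀ ^ (1/β) * A and derive the contradiction
  have hBle : B ≤ C₀ ^ (1/β) * A := by
    have h5 : (B ^ β) ^ (1/β) ≤ (C₀ * δ ^ (-(p₁-1))) ^ (1/β) :=
      Real.rpow_le_rpow (Real.rpow_pos_of_pos hBpos β).le hBβ (by positivity)
    rw [← Real.rpow_mul hBpos.le, mul_one_div, div_self hβ0.ne', Real.rpow_one] at h5
    rw [Real.mul_rpow hC₀0.le (Real.rpow_pos_of_pos hδ _).le,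
      ← Real.rpow_mul hδ.le] at h5
    have hexp : -(p₁-1) * (1/β) = -(p₁ - 1) / (p₁ - p₂ + 1) := by
      rw [hβ]; ring
    rw [hexp] at h5
    exact h5
  have hfin : (C₀ ^ (1/β) + 4 * Real.log t₀) * A ≤ C₀ ^ (1/β) * A := by
    rw [hB, hK₃] at hBle; exact hBle
  linarith only [hfin, mul_pos hlt₀ hApos]
end

section
/- Let Y : [2, T) → [0, ∞) be C¹ and nondecreasing, and suppose there exist constants A, B > 0 and p > 1 such that for all M ∈ [2, T): Y(M)^p ≤ A M (log M)^{p-1} Y'(M) and ε^p ≤ B M Y'(M), where ε ∈ (0,1). Then there exist constants K, ε₀ > 0 depending only on A, B, p such that if ε < ε₀ then T ≤ exp(K ε^{-p(p-1)}). -/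
open Real Set

/-- If `f` has derivative `f'` on `[a,b]` and `f' ≥ 0` there, then `f a ≤ f b`. -/
lemma aux_le_of_deriv_nonneg {f f' : ℝ → ℝ} {a b : ℝ} (hab : a ≤ b)
    (hd : ∀ x ∈ Set.Icc a b, HasDerivAt f (f' x) x)
    (h0 : ∀ x ∈ Set.Icc a b, 0 ≤ f' x) : f a ≤ f b := by
  have hmono : MonotoneOn f (Set.Icc a b) := by
    apply monotoneOn_of_hasDerivWithinAt_nonneg (f' := f') (convex_Icc a b)
    · exact fun x hx => (hd x hx).continuousAt.continuousWithinAt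
    · exact fun x hx => ((hd x (interior_subset hx)).hasDerivWithinAt)
    · exact fun x hx => h0 x (interior_subset hx)
  exact hmono (left_mem_Icc.2 hab) (right_mem_Icc.2 hab) hab

/-- If `f` has derivative `f'` on `[a,b]` and `f' ≤ 0` there, then `f b ≤ f a`. -/
lemma aux_le_of_deriv_nonpos {f f' : ℝ → ℝ} {a b : ℝ} (hab : a ≤ b)
    (hd : ∀ x ∈ Set.Icc a b, HasDerivAt f (f' x) x)
    (h0 : ∀ x ∈ Set.Icc a b, f' x ≤ 0) : f b ≤ f a := by
  have := aux_le_of_deriv_nonneg (f := fun x => -f x) (f' := fun x => -f' x) hab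
    (fun x hx => (hd x hx).neg) (fun x hx => neg_nonneg.2 (h0 x hx))
  simpa using this

set_option maxHeartbeats 1000000 in
/-- Critical-case lifespan bound: differential inequalities for Y give
    T ≤ exp(K ε^{-p(p-1)}). -/
theorem critical_lifespan_from_Y (A B p : ℝ) (hA : 0 < A) (hB : 0 < B) (hp : 1 < p) :
    ∃ K ε₀ : ℝ, 0 < K ∧ 0 < ε₀ ∧
      ∀ ε : ℝ, 0 < ε → ε < ε₀ →
        ∀ T : ℝ, 2 < T →
          ∀ Y Y' : ℝ → ℝ,
            (∀ M ∈ Set.Ico (2:ℝ) T, HasDerivAt Y (Y' M) M) →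
            (∀ M ∈ Set.Ico (2:ℝ) T, 0 ≤ Y M) →
            MonotoneOn Y (Set.Ico (2:ℝ) T) →
            (∀ M ∈ Set.Ico (2:ℝ) T, Y M ^ p ≤ A * M * (Real.log M) ^ (p - 1) * Y' M) →
            (∀ M ∈ Set.Ico (2:ℝ) T, ε ^ p ≤ B * M * Y' M) →
            T ≤ Real.exp (K * ε ^ (-(p * (p - 1)))) := by
  have hp1 : 0 < p - 1 := by linarith
  set C4 : ℝ := (4 * B) ^ (p - 1) with hC4def
  have hC4 : 0 < C4 := rpow_pos_of_pos (by linarith) _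
  set K : ℝ := 2 * A * C4 / (p - 1) + 4 with hKdef
  clear_value C4 K
  have hK0 : 0 < K := by rw [hKdef]; positivity
  have hK4 : 4 ≤ K := by
    have h5 : 0 < 2 * A * C4 / (p - 1) := by positivity
    rw [hKdef]; linarith
  refine ⟨K, 1, hK0, one_pos, ?_⟩
  intro ε hε hε1 T hT2 Y Y' hder hpos hmono hineq1 hineq2
  by_contra hcon
  push_neg at hcon
  set E : ℝ := ε ^ (-(p * (p - 1))) with hEdef
  clear_value E
  have hq : 0 < p * (p - 1) := by positivity
  have hE0 : 0 < E := by rw [hEdef]; exact rpow_pos_of_pos hε _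
  have hE1 : 1 < E := by
    rw [hEdef]
    exact (Real.one_lt_rpow_iff_of_pos hε).2 (Or.inr ⟨hε1, by linarith⟩)
  set Cq : ℝ := ε ^ (p * (p - 1)) with hCqdef
  clear_value Cq
  have hCq0 : 0 < Cq := by rw [hCqdef]; exact rpow_pos_of_pos hε _
  have hECq : E * Cq = 1 := by
    rw [hEdef, hCqdef, ← Real.rpow_add hε]
    simp
  set t1 : ℝ := K * E / 2 with ht1def
  clear_value t1
  have ht1 : 2 ≤ t1 := by
    have h4E : (4:ℝ) * 1 ≤ K * E := mul_le_mul hK4 hE1.le zero_le_one (by linarith)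
    rw [ht1def]; linarith
  have ht1pos : 0 < t1 := by linarith
  set M1 : ℝ := Real.exp t1 with hM1def
  set M2 : ℝ := Real.exp (2 * t1) with hM2def
  clear_value M1 M2
  have hlogM1 : Real.log M1 = t1 := by rw [hM1def, Real.log_exp]
  have hlogM2 : Real.log M2 = 2 * t1 := by rw [hM2def, Real.log_exp]
  have hM1pos : 0 < M1 := by rw [hM1def]; exact Real.exp_pos _
  have hM2pos : 0 < M2 := by rw [hM2def]; exact Real.exp_pos _
  have h2M1 : 2 < M1 := by
    have h := Real.add_one_lt_exp (show t1 ≠ 0 by linarith)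
    rw [hM1def]; linarith
  have hM1M2 : M1 ≤ M2 := by rw [hM1def, hM2def]; exact Real.exp_le_exp.2 (by linarith)
  have hM2T : M2 < T := by
    have : (2 : ℝ) * t1 = K * E := by rw [ht1def]; ring
    rw [hM2def, this]; exact hcon
  have hM1T : M1 < T := lt_of_le_of_lt hM1M2 hM2T
  -- membership helpers
  have hmem1 : ∀ M ∈ Set.Icc (2:ℝ) M1, M ∈ Set.Ico (2:ℝ) T :=
    fun M hM => ⟨hM.1, lt_of_le_of_lt hM.2 hM1T⟩
  have hmem2 : ∀ M ∈ Set.Icc M1 M2, M ∈ Set.Ico (2:ℝ) T :=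
    fun M hM => ⟨le_trans h2M1.le hM.1, lt_of_le_of_lt hM.2 hM2T⟩
  -- Step 1: lower bound for Y at M1
  set lb : ℝ := ε ^ p / B with hlbdef
  clear_value lb
  have hεp : 0 < ε ^ p := rpow_pos_of_pos hε _
  have hlb : 0 < lb := by rw [hlbdef]; positivity
  set m : ℝ := ε ^ p * t1 / (2 * B) with hmdef
  clear_value m
  have hm : 0 < m := by rw [hmdef]; positivity
  have hlow : Y 2 - lb * Real.log 2 ≤ Y M1 - lb * Real.log M1 := by
    apply aux_le_of_deriv_nonneg (f := fun M => Y M - lb * Real.log M)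
      (f' := fun M => Y' M - lb * M⁻¹) (by linarith)
    · intro x hx
      have hx0 : (0:ℝ) < x := by linarith [hx.1]
      exact (hder x (hmem1 x hx)).sub ((Real.hasDerivAt_log (ne_of_gt hx0)).const_mul lb)
    · intro x hx
      have hx0 : (0:ℝ) < x := by linarith [hx.1]
      have h2 := hineq2 x (hmem1 x hx)
      have : lb * x⁻¹ ≤ Y' x := by
        have he : lb * x⁻¹ = ε ^ p / (B * x) := by rw [hlbdef]; field_simp
        rw [he, div_le_iff₀ (by positivity)]
        calc ε ^ p ≤ B * x * Y' x := h2
          _ = Y' x * (B * x) := by ring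
      linarith
  have hYM1 : m ≤ Y M1 := by
    have hY2 : 0 ≤ Y 2 := hpos 2 ⟨le_refl _, hT2⟩
    have hlog2 : Real.log 2 < 1 := by
      have := Real.log_two_lt_d9; linarith
    have h1 : lb * Real.log 2 ≤ lb * (t1 / 2) := by
      apply mul_le_mul_of_nonneg_left _ hlb.le
      linarith
    have hmeq : m = lb * t1 / 2 := by
      rw [hmdef, hlbdef]; field_simp
    rw [hlogM1] at hlow
    rw [hmeq]; linarith
  have hYge : ∀ M ∈ Set.Icc M1 M2, m ≤ Y M := fun M hM =>
    le_trans hYM1 (hmono (hmem2 M1 ⟨le_refl _, hM1M2⟩) (hmem2 M hM) hM.1)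
  -- Step 2: Riccati comparison on [M1, M2]
  set P : ℝ := (2 * t1) ^ (p - 1) with hPdef
  clear_value P
  have hP : 0 < P := by rw [hPdef]; exact rpow_pos_of_pos (by linarith) _
  set γ : ℝ := (p - 1) / (A * P) with hγdef
  clear_value γ
  have hγ : 0 < γ := by rw [hγdef]; positivity
  have hricc : Y M2 ^ (1 - p) + γ * Real.log M2 ≤ Y M1 ^ (1 - p) + γ * Real.log M1 := by
    apply aux_le_of_deriv_nonpos (f := fun M => Y M ^ (1 - p) + γ * Real.log M)
      (f' := fun M => Y' M * (1 - p) * Y M ^ ((1 - p) - 1) + γ * M⁻¹) hM1M2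
    · intro x hx
      have hYx : 0 < Y x := lt_of_lt_of_le hm (hYge x hx)
      have hx0 : (0:ℝ) < x := lt_trans (by norm_num) (lt_of_lt_of_le h2M1 hx.1)
      exact ((hder x (hmem2 x hx)).rpow_const (Or.inl (ne_of_gt hYx))).add
        ((Real.hasDerivAt_log (ne_of_gt hx0)).const_mul γ)
    · intro x hx
      have hYx : 0 < Y x := lt_of_lt_of_le hm (hYge x hx)
      have hx0 : (0:ℝ) < x := lt_trans (by norm_num) (lt_of_lt_of_le h2M1 hx.1)
      have hYxp : 0 < Y x ^ p := rpow_pos_of_pos hYx _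
      have hineq := hineq1 x (hmem2 x hx)
      have hlogx1 : t1 ≤ Real.log x := by
        rw [← hlogM1]; exact Real.log_le_log hM1pos hx.1
      have hlogx2 : Real.log x ≤ 2 * t1 := by
        rw [← hlogM2]; exact Real.log_le_log hx0 hx.2
      have hlogpow : (Real.log x) ^ (p - 1) ≤ P := by
        rw [hPdef]
        exact Real.rpow_le_rpow (by linarith) hlogx2 hp1.le
      have hlogpos : 0 < (Real.log x) ^ (p - 1) :=
        rpow_pos_of_pos (by linarith) _
      have hY' : 0 < Y' x := by
        rcases lt_or_ge 0 (Y' x) with h | h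
        · exact h
        exfalso
        have hC : 0 ≤ A * x * Real.log x ^ (p - 1) := by positivity
        have hnp : A * x * Real.log x ^ (p - 1) * Y' x ≤ 0 :=
          mul_nonpos_of_nonneg_of_nonpos hC h
        linarith [hYxp, hineq]
      have h1 : Y x ^ p ≤ A * x * P * Y' x := by
        have h0 : 0 ≤ A * x * Y' x := by positivity
        calc Y x ^ p ≤ A * x * Real.log x ^ (p - 1) * Y' x := hineq
          _ = A * x * Y' x * Real.log x ^ (p - 1) := by ring
          _ ≤ A * x * Y' x * P := mul_le_mul_of_nonneg_left hlogpow h0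
          _ = A * x * P * Y' x := by ring
      have hrw : Y x ^ ((1 - p) - 1) = (Y x ^ p)⁻¹ := by
        rw [show (1:ℝ) - p - 1 = -p by ring, Real.rpow_neg hYx.le]
      rw [hrw]
      have key : γ * x⁻¹ ≤ (p - 1) * (Y x ^ p)⁻¹ * Y' x := by
        have e1 : γ * x⁻¹ = (p - 1) / (A * P * x) := by
          rw [hγdef]; field_simp
        have e2 : (p - 1) * (Y x ^ p)⁻¹ * Y' x = ((p - 1) * Y' x) / (Y x ^ p) := by
          field_simp
        rw [e1, e2, div_le_div_iff₀ (by positivity) hYxp]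
        calc (p - 1) * Y x ^ p = (p - 1) * (Y x ^ p) := by ring
          _ ≤ (p - 1) * (A * x * P * Y' x) := mul_le_mul_of_nonneg_left h1 hp1.le
          _ = (p - 1) * Y' x * (A * P * x) := by ring
      have e3 : Y' x * (1 - p) * (Y x ^ p)⁻¹ = -((p - 1) * (Y x ^ p)⁻¹ * Y' x) := by
        ring
      linarith [key, e3]
  -- Step 3: derive the contradiction
  have hpos2 : 0 < Y M2 ^ (1 - p) :=
    rpow_pos_of_pos (lt_of_lt_of_le hm (hYge M2 ⟨hM1M2, le_refl _⟩)) _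
  have hmono1 : Y M1 ^ (1 - p) ≤ m ^ (1 - p) :=
    Real.rpow_le_rpow_of_nonpos hm hYM1 (by linarith)
  -- numeric bound: m ^ (1 - p) ≤ γ * t1
  have hnum : m ^ (1 - p) ≤ γ * t1 := by
    set C2B : ℝ := (2 * B) ^ (p - 1) with hC2Bdef
    have hC2B : 0 < C2B := by rw [hC2Bdef]; exact rpow_pos_of_pos (by linarith) _
    set C2 : ℝ := (2:ℝ) ^ (p - 1) with hC2def
    have hC2 : 0 < C2 := by rw [hC2def]; exact rpow_pos_of_pos (by norm_num) _
    set Ct : ℝ := t1 ^ (p - 1) with hCtdef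
    clear_value C2B C2 Ct
    have hCt : 0 < Ct := by rw [hCtdef]; exact rpow_pos_of_pos ht1pos _
    have hC24 : C2 * C2B = C4 := by
      rw [hC2def, hC2Bdef, hC4def, ← Real.mul_rpow (by norm_num) (by linarith)]
      congr 1
      ring
    have hPe : P = C2 * Ct := by
      rw [hPdef, hC2def, hCtdef, ← Real.mul_rpow (by norm_num) ht1pos.le]
    have hmp : m ^ (p - 1) = Cq * Ct / C2B := by
      rw [hmdef, Real.div_rpow (by positivity) (by linarith),
        Real.mul_rpow hεp.le ht1pos.le, ← Real.rpow_mul hε.le, hCqdef, hCtdef, hC2Bdef]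
    have hm1p : m ^ (1 - p) = (m ^ (p - 1))⁻¹ := by
      rw [show (1:ℝ) - p = -(p - 1) by ring, Real.rpow_neg hm.le]
    rw [hm1p, hmp, hγdef, hPe]
    rw [inv_div, div_mul_eq_mul_div, div_le_div_iff₀ (by positivity) (by positivity)]
    -- goal: C2B * ((p-1) ... ) form; reduce via key identities
    have key1 : (p - 1) * t1 * Cq = (p - 1) * K / 2 := by
      have h : (p - 1) * t1 * Cq = ((p - 1) * K / 2) * (E * Cq) := by
        rw [ht1def]; ring
      rw [h, hECq, mul_one]
    have key1' : (p - 1) * K / 2 = A * C4 + 2 * (p - 1) := by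
      rw [hKdef]; field_simp; ring
    have key2 : (p - 1) * t1 * (Cq * Ct) = (A * C4 + 2 * (p - 1)) * Ct := by
      rw [show (p - 1) * t1 * (Cq * Ct) = ((p - 1) * t1 * Cq) * Ct by ring, key1, key1']
    have lhs : C2B * (A * (C2 * Ct)) = A * C4 * Ct := by
      rw [← hC24]; ring
    rw [lhs, key2]
    have e4 : (A * C4 + 2 * (p - 1)) * Ct = A * C4 * Ct + 2 * ((p - 1) * Ct) := by ring
    linarith [e4, mul_pos hp1 hCt]
  have e5 : γ * Real.log M2 = 2 * (γ * t1) := by rw [hlogM2]; ring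
  have e6 : γ * Real.log M1 = γ * t1 := by rw [hlogM1]
  linarith [hricc, hmono1, hpos2, hnum, e5, e6]
end
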